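/- Let n ≥ 1 be an integer, let u < v be real numbers, let A > 0, and let f : [u,v] → ℝ be n times continuously differentiable with |f^{(n)}(x)| ≥ A for every x ∈ [u,v]. Then there exists a closed subinterval J ⊆ [u,v] of length at least (v−u)/4^n such that |f(x)| ≥ A·(v−u)^n / 4^{n(n+1)/2} for every x ∈ J. -/

import Mathlib

open Set

/-- Positive-derivative case of the one-step lemma. -/
lemma step_pos (u v A : ℝ) (huv : u < v) (hA : 0 < A) (f g : ℝ → ℝ)
    (hfc : ContinuousOn f (Set.Icc u v))
    (hfg : ∀ x ∈ Set.Icc u v, HasDerivWithinAt f (g x) (Set.Icc u v) x)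
    (hder : ∀ x ∈ Set.Icc u v, A ≤ g x) :
    ∃ p q : ℝ, u ≤ p ∧ p < q ∧ q ≤ v ∧ (v - u) / 4 ≤ q - p ∧
      ∀ x ∈ Set.Icc p q, A * (v - u) / 4 ≤ |f x| := by
  have hconv : Convex ℝ (Set.Icc u v) := convex_Icc u v
  have hderiv : ∀ x ∈ interior (Set.Icc u v), A ≤ deriv f x := by
    intro x hx
    rw [interior_Icc] at hx
    have h := (hfg x (Ioo_subset_Icc_self hx)).hasDerivAt (Icc_mem_nhds hx.1 hx.2)
    rw [h.deriv]
    exact hder x (Ioo_subset_Icc_self hx)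
  have hdiff : DifferentiableOn ℝ f (interior (Set.Icc u v)) := by
    intro x hx
    rw [interior_Icc] at hx
    exact (((hfg x (Ioo_subset_Icc_self hx)).hasDerivAt
      (Icc_mem_nhds hx.1 hx.2)).differentiableAt).differentiableWithinAt
  have key : ∀ x ∈ Set.Icc u v, ∀ y ∈ Set.Icc u v, x ≤ y → A * (y - x) ≤ f y - f x :=
    hconv.mul_sub_le_image_sub_of_le_deriv hfc hdiff hderiv
  obtain ⟨c, hc⟩ : ∃ c : ℝ, c = u + (v - u) / 4 := ⟨_, rfl⟩
  obtain ⟨d, hd⟩ : ∃ d : ℝ, d = v - (v - u) / 4 := ⟨_, rfl⟩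
  have hpos : 0 < v - u := sub_pos.2 huv
  have hcmem : c ∈ Set.Icc u v := by constructor <;> [linarith; linarith]
  have hdmem : d ∈ Set.Icc u v := by constructor <;> [linarith; linarith]
  have hcd : A * (v - u) / 2 ≤ f d - f c := by
    have := key c hcmem d hdmem (by linarith)
    have h2 : A * (d - c) = A * (v - u) / 2 := by rw [hc, hd]; ring
    linarith
  by_cases hfd : A * (v - u) / 4 ≤ f d
  · refine ⟨d, v, by linarith, by linarith, le_refl v, by linarith, ?_⟩
    intro x hx
    have hxm : x ∈ Set.Icc u v := ⟨le_trans hdmem.1 hx.1, hx.2⟩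
    have := key d hdmem x hxm hx.1
    have h3 : 0 ≤ A * (x - d) := mul_nonneg hA.le (by linarith [hx.1])
    have : A * (v - u) / 4 ≤ f x := by linarith
    calc A * (v - u) / 4 ≤ f x := this
      _ ≤ |f x| := le_abs_self _
  · refine ⟨u, c, le_refl u, by linarith, by linarith [hcmem.2], by linarith, ?_⟩
    intro x hx
    have hxm : x ∈ Set.Icc u v := ⟨hx.1, le_trans hx.2 hcmem.2⟩
    have := key x hxm c hcmem hx.2
    have h3 : 0 ≤ A * (c - x) := mul_nonneg hA.le (by linarith [hx.2])
    push_neg at hfd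
    have hfc' : f c ≤ -(A * (v - u) / 4) := by linarith
    have : f x ≤ -(A * (v - u) / 4) := by linarith
    calc A * (v - u) / 4 ≤ -(f x) := by linarith
      _ ≤ |f x| := neg_le_abs _

/-- One-step lemma: `|f'| ≥ A` on `[u,v]` gives a subinterval of length `(v-u)/4`
on which `|f| ≥ A(v-u)/4`. -/
lemma step_abs (u v A : ℝ) (huv : u < v) (hA : 0 < A) (f g : ℝ → ℝ)
    (hgc : ContinuousOn g (Set.Icc u v))
    (hfc : ContinuousOn f (Set.Icc u v))
    (hfg : ∀ x ∈ Set.Icc u v, HasDerivWithinAt f (g x) (Set.Icc u v) x)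
    (hder : ∀ x ∈ Set.Icc u v, A ≤ |g x|) :
    ∃ p q : ℝ, u ≤ p ∧ p < q ∧ q ≤ v ∧ (v - u) / 4 ≤ q - p ∧
      ∀ x ∈ Set.Icc p q, A * (v - u) / 4 ≤ |f x| := by
  have hne : ∀ x ∈ Set.Icc u v, g x ≠ 0 := by
    intro x hx h0
    have := hder x hx
    rw [h0, abs_zero] at this
    linarith
  -- g has constant sign on [u,v]
  have hsign : (∀ x ∈ Set.Icc u v, 0 < g x) ∨ (∀ x ∈ Set.Icc u v, g x < 0) := by
    by_cases hgu : 0 < g u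
    · left
      intro x hx
      by_contra hle
      push_neg at hle
      have hlt : g x < 0 := lt_of_le_of_ne hle (hne x hx)
      have hsub : Set.Icc u x ⊆ Set.Icc u v := Set.Icc_subset_Icc le_rfl hx.2
      have : (0 : ℝ) ∈ g '' Set.Icc u x := by
        apply intermediate_value_Icc' hx.1 (hgc.mono hsub)
        exact ⟨hlt.le, hgu.le⟩
      obtain ⟨c, hc, hc0⟩ := this
      exact hne c (hsub hc) hc0
    · right
      push_neg at hgu
      have hgu' : g u < 0 := lt_of_le_of_ne hgu (hne u (Set.left_mem_Icc.2 huv.le))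
      intro x hx
      by_contra hle
      push_neg at hle
      have hlt : 0 < g x := lt_of_le_of_ne hle (Ne.symm (hne x hx))
      have hsub : Set.Icc u x ⊆ Set.Icc u v := Set.Icc_subset_Icc le_rfl hx.2
      have : (0 : ℝ) ∈ g '' Set.Icc u x := by
        apply intermediate_value_Icc hx.1 (hgc.mono hsub)
        exact ⟨hgu'.le, hlt.le⟩
      obtain ⟨c, hc, hc0⟩ := this
      exact hne c (hsub hc) hc0
  rcases hsign with hpos | hneg
  · exact step_pos u v A huv hA f g hfc hfg (fun x hx => by
      have := hder x hx; rwa [abs_of_pos (hpos x hx)] at this)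
  · obtain ⟨p, q, h1, h2, h3, h4, h5⟩ := step_pos u v A huv hA (-f) (-g)
      hfc.neg (fun x hx => (hfg x hx).neg)
      (fun x hx => by
        have := hder x hx; rwa [abs_of_neg (hneg x hx)] at this)
    exact ⟨p, q, h1, h2, h3, h4, fun x hx => by
      simpa [abs_neg] using h5 x hx⟩

theorem stmt_2 (n : ℕ) (hn : 1 ≤ n) (u v A : ℝ) (huv : u < v) (hA : 0 < A)
    (f : ℝ → ℝ) (hf : ContDiffOn ℝ n f (Set.Icc u v))
    (hder : ∀ x ∈ Set.Icc u v, A ≤ |iteratedDerivWithin n f (Set.Icc u v) x|) :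
    ∃ p q : ℝ, u ≤ p ∧ p < q ∧ q ≤ v ∧ (v - u) / 4 ^ n ≤ q - p ∧
      ∀ x ∈ Set.Icc p q, A * (v - u) ^ n / 4 ^ (n * (n + 1) / 2) ≤ |f x| := by
  induction n, hn using Nat.le_induction generalizing u v A f with
  | base =>
    have hud : UniqueDiffOn ℝ (Set.Icc u v) := uniqueDiffOn_Icc huv
    set g := derivWithin f (Set.Icc u v) with hg
    have hgc : ContinuousOn g (Set.Icc u v) :=
      (hf.derivWithin (m := 0) hud (by norm_num)).continuousOn
    have hfg : ∀ x ∈ Set.Icc u v, HasDerivWithinAt f (g x) (Set.Icc u v) x := by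
      intro x hx
      exact (hf.differentiableOn (by norm_num) x hx).hasDerivWithinAt
    have hder' : ∀ x ∈ Set.Icc u v, A ≤ |g x| := by
      intro x hx
      have := hder x hx
      rwa [iteratedDerivWithin_one] at this
    obtain ⟨p, q, h1, h2, h3, h4, h5⟩ :=
      step_abs u v A huv hA f g hgc (hf.continuousOn) hfg hder'
    refine ⟨p, q, h1, h2, h3, by simpa using h4, ?_⟩
    intro x hx
    have := h5 x hx
    norm_num at this ⊢
    linarith
  | succ n hn1 ih =>
    have hud : UniqueDiffOn ℝ (Set.Icc u v) := uniqueDiffOn_Icc huv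
    set g := derivWithin f (Set.Icc u v) with hg
    have hgcd : ContDiffOn ℝ n g (Set.Icc u v) := by
      apply hf.derivWithin hud
      exact_mod_cast le_refl (n + 1 : ℕ∞)
    have hderg : ∀ x ∈ Set.Icc u v, A ≤ |iteratedDerivWithin n g (Set.Icc u v) x| := by
      intro x hx
      have := hder x hx
      rwa [iteratedDerivWithin_succ'] at this
    obtain ⟨p, q, hp, hpq, hq, hlen, hB⟩ := ih u v A huv hA g hgcd hderg
    -- now apply the one-step lemma to f on [p, q]
    set B := A * (v - u) ^ n / 4 ^ (n * (n + 1) / 2) with hBdef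
    have hBpos : 0 < B := by
      apply div_pos (mul_pos hA (pow_pos (by linarith) n)) (pow_pos (by norm_num) _)
    have hsub : Set.Icc p q ⊆ Set.Icc u v := Set.Icc_subset_Icc hp hq
    have hfg : ∀ x ∈ Set.Icc p q, HasDerivWithinAt f (g x) (Set.Icc p q) x := by
      intro x hx
      exact ((hf.differentiableOn (by simp) x
        (hsub hx)).hasDerivWithinAt).mono hsub
    obtain ⟨p', q', h1, h2, h3, h4, h5⟩ :=
      step_abs p q B hpq hBpos f g (hgcd.continuousOn.mono hsub)
        (hf.continuousOn.mono hsub) hfg (fun x hx => hB x hx)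
    refine ⟨p', q', le_trans hp h1, h2, le_trans h3 hq, ?_, ?_⟩
    · have : (v - u) / 4 ^ (n + 1) ≤ (q - p) / 4 := by
        rw [div_le_div_iff₀ (by positivity) (by norm_num)]
        calc (v - u) * 4 = ((v - u) / 4 ^ n) * 4 ^ (n + 1) := by
              field_simp; ring
          _ ≤ (q - p) * 4 ^ (n + 1) := by
              apply mul_le_mul_of_nonneg_right hlen (by positivity)
      linarith
    · intro x hx
      have h5' := h5 x hx
      have hq4 : B * ((v - u) / 4 ^ n) / 4 ≤ B * (q - p) / 4 := by
        apply div_le_div_of_nonneg_right _ (by norm_num)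
        exact mul_le_mul_of_nonneg_left hlen hBpos.le
      have heq : B * ((v - u) / 4 ^ n) / 4
          = A * (v - u) ^ (n + 1) / 4 ^ ((n + 1) * (n + 1 + 1) / 2) := by
        rw [hBdef]
        have haux : (n + 1) * (n + 1 + 1) = n * (n + 1) + 2 * (n + 1) := by ring
        have hexp : (n + 1) * (n + 1 + 1) / 2 = n * (n + 1) / 2 + (n + 1) := by omega
        rw [hexp, pow_add, pow_succ]
        field_simp
        ring
      calc A * (v - u) ^ (n + 1) / 4 ^ ((n + 1) * (n + 1 + 1) / 2)
          = B * ((v - u) / 4 ^ n) / 4 := heq.symm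
        _ ≤ B * (q - p) / 4 := hq4
        _ ≤ |f x| := h5'
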